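/- If 𝓑 is a countable family of Borel subsets of 2^ℕ, then the union of 𝓑, viewed as a family of subsets of ℕ, is not a free ultrafilter on ℕ (hence 𝔲_B ≥ ℵ₁). -/

import Mathlib

open Topology

/-- Identify `x : ℕ → Bool` with the subset `{n | x n = true}` of `ℕ`. -/
def toSet (x : ℕ → Bool) : Set ℕ := {n | x n = true}

/-- A free ultrafilter is one containing all cofinite sets. -/
def IsFree (U : Ultrafilter ℕ) : Prop := ∀ s : Set ℕ, s.Finite → sᶜ ∈ U

/-- The homeomorphism of Cantor space that flips all coordinates outside `I`. -/
def flipOutside (I : Finset ℕ) : (ℕ → Bool) ≃ₜ (ℕ → Bool) where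
  toFun x n := if n ∈ I then x n else !x n
  invFun x n := if n ∈ I then x n else !x n
  left_inv x := by funext n; by_cases h : n ∈ I <;> simp [h]
  right_inv x := by funext n; by_cases h : n ∈ I <;> simp [h]
  continuous_toFun := continuous_pi fun n => by
    by_cases h : n ∈ I
    · simpa [h] using continuous_apply n
    · simpa [h, Function.comp_def] using
        (continuous_of_discreteTopology (f := fun b : Bool => !b)).comp (continuous_apply n)
  continuous_invFun := continuous_pi fun n => by
    by_cases h : n ∈ I
    · simpa [h] using continuous_apply n
    · simpa [h, Function.comp_def] using
        (continuous_of_discreteTopology (f := fun b : Bool => !b)).comp (continuous_apply n)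

lemma flipOutside_apply (I : Finset ℕ) (x : ℕ → Bool) (n : ℕ) :
    flipOutside I x n = if n ∈ I then x n else !x n := rfl

lemma mem_iff_mem_of_diff_finite (U : Ultrafilter ℕ) (hfree : IsFree U) {s t D : Set ℕ}
    (hD : D.Finite) (h : ∀ n ∉ D, (n ∈ s ↔ n ∈ t)) : s ∈ U ↔ t ∈ U := by
  have hDc : Dᶜ ∈ U := hfree D hD
  constructor
  · intro hs
    exact Filter.mem_of_superset (Filter.inter_mem hs hDc) fun n hn => (h n hn.2).1 hn.1
  · intro ht
    exact Filter.mem_of_superset (Filter.inter_mem ht hDc) fun n hn => (h n hn.2).2 hn.1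

lemma isMeagre_union {X : Type*} [TopologicalSpace X] {s t : Set X}
    (hs : IsMeagre s) (ht : IsMeagre t) : IsMeagre (s ∪ t) := by
  rw [IsMeagre, Set.compl_union]
  exact Filter.inter_mem hs ht

/-- The union of a countable family of Borel subsets of `2^ℕ`, viewed as a family
of subsets of `ℕ`, is never a free ultrafilter on `ℕ`. -/
theorem countable_borel_union_not_free_ultrafilter (𝓑 : Set (Set (ℕ → Bool)))
    (hct : 𝓑.Countable) (hBorel : ∀ B ∈ 𝓑, MeasurableSet B)
    (U : Ultrafilter ℕ) (hfree : IsFree U) :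
    toSet '' ⋃₀ 𝓑 ≠ {s : Set ℕ | s ∈ U} := by
  classical
  intro heq
  set A : Set (ℕ → Bool) := {x | toSet x ∈ U} with hAdef
  have hinj : Function.Injective toSet := by
    intro x y h
    funext n
    have := Set.ext_iff.mp h n
    revert this
    simp only [toSet, Set.mem_setOf_eq]
    cases x n <;> cases y n <;> simp
  -- the flip property
  have hflip : ∀ (I : Finset ℕ) (x : ℕ → Bool), (flipOutside I x ∈ A ↔ x ∉ A) := by
    intro I x
    have h1 : toSet (flipOutside I x) ∈ U ↔ (toSet x)ᶜ ∈ U := by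
      apply mem_iff_mem_of_diff_finite U hfree I.finite_toSet
      intro n hn
      simp only [Finset.mem_coe] at hn
      simp [toSet, flipOutside_apply, hn]
    simpa [hAdef, Set.mem_setOf_eq, Ultrafilter.compl_mem_iff_notMem] using h1
  -- A equals the union, hence is Borel
  have hAeq : ⋃₀ 𝓑 = A := by
    ext x
    constructor
    · intro hx
      have : toSet x ∈ {s : Set ℕ | s ∈ U} := heq ▸ Set.mem_image_of_mem _ hx
      exact this
    · intro hx
      have hx' : toSet x ∈ toSet '' ⋃₀ 𝓑 := by rw [heq]; exact hx
      obtain ⟨y, hy, hxy⟩ := hx'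
      exact hinj hxy ▸ hy
  have hmeasA : MeasurableSet A := hAeq ▸ MeasurableSet.sUnion hct hBorel
  obtain ⟨u, huo, hures⟩ := hmeasA.baireMeasurableSet.residualEq_isOpen
  -- the symmetric difference is meager
  have hm : IsMeagre {x | ¬ (x ∈ A ↔ x ∈ u)} := by
    rw [IsMeagre]
    refine Filter.mem_of_superset hures fun x hx => ?_
    simp only [Set.mem_compl_iff, Set.mem_setOf_eq, not_not]
    exact Eq.to_iff hx
  set m : Set (ℕ → Bool) := {x | ¬ (x ∈ A ↔ x ∈ u)} with hmdef
  -- A is not meager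
  have hA_not_meagre : ¬ IsMeagre A := by
    intro h
    have h2 : IsMeagre ((flipOutside ∅) ⁻¹' A) :=
      h.preimage_of_isOpenMap (flipOutside ∅).continuous (flipOutside ∅).isOpenMap
    have h3 : ((flipOutside ∅) ⁻¹' A) = Aᶜ := by
      ext x; simpa using hflip ∅ x
    rw [h3] at h2
    have huniv : IsMeagre (Set.univ : Set (ℕ → Bool)) :=
      (isMeagre_union h h2).mono (by simp)
    rw [IsMeagre] at huniv
    have hd := dense_of_mem_residual huniv
    simpa using hd.nonempty
  -- u is nonempty
  have hune : u.Nonempty := by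
    rcases Set.eq_empty_or_nonempty u with h | h
    · exfalso
      apply hA_not_meagre
      refine hm.mono fun x hx => ?_
      simp [hmdef, h, hx]
    · exact h
  obtain ⟨x₀, hx₀⟩ := hune
  -- find a basic cylinder inside u
  obtain ⟨I, v, hv, hvsub⟩ := isOpen_pi_iff.mp huo x₀ hx₀
  set C : Set (ℕ → Bool) := (I : Set ℕ).pi (fun n => {x₀ n}) with hCdef
  have hCsub : C ⊆ u := by
    refine subset_trans (Set.pi_mono fun i hi => ?_) hvsub
    intro b hb
    simp only [Set.mem_singleton_iff] at hb
    exact hb ▸ (hv i hi).2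
  have hCopen : IsOpen C := isOpen_set_pi I.finite_toSet fun n _ => isOpen_discrete _
  have hx₀C : x₀ ∈ C := fun i _ => rfl
  have hφC : ∀ x ∈ C, flipOutside I x ∈ C := by
    intro x hx i hi
    have : x i = x₀ i := hx i hi
    simp only [flipOutside_apply]
    rw [if_pos (by simpa using hi)]
    exact this
  -- C is meager: contradiction
  have hCm : C ⊆ m ∪ (flipOutside I) ⁻¹' m := by
    intro x hx
    by_contra h
    simp only [Set.mem_union, not_or] at h
    obtain ⟨h1, h2⟩ := h
    have hxu : x ∈ u := hCsub hx
    have hxA : x ∈ A := by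
      have := not_not.mp h1
      exact this.mpr hxu
    have hφxA : flipOutside I x ∈ A := by
      have := not_not.mp h2
      exact this.mpr (hCsub (hφC x hx))
    exact (hflip I x).mp hφxA hxA
  have hCmeagre : IsMeagre C :=
    (isMeagre_union hm (hm.preimage_of_isOpenMap (flipOutside I).continuous
      (flipOutside I).isOpenMap)).mono hCm
  rw [IsMeagre] at hCmeagre
  have hd := dense_of_mem_residual hCmeagre
  obtain ⟨x, hx1, hx2⟩ := hd.inter_open_nonempty C hCopen ⟨x₀, hx₀C⟩
  exact hx2 hx1
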